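/- For every integer d ≥ 2, every 0 < α < 1, and every index i ∈ {1,…,d}, the series ∑_{n ∈ (ℤ₊)^d} n_i^α/((n₁² + n₂² + ⋯ + n_d²)·n₂·n₃⋯n_d), taken over all d-tuples n = (n₁,…,n_d) of positive integers, converges (is finite). -/

import Mathlib

open Finset Real

lemma pnat_rpow_summable {c : ℝ} (hc : 1 < c) :
    Summable (fun m : ℕ+ => ((m : ℕ) : ℝ) ^ (-c)) := by
  have h : Summable (fun n : ℕ => (n : ℝ) ^ (-c)) :=
    Real.summable_nat_rpow.2 (by linarith)
  exact h.comp_injective (fun a b hab => PNat.coe_injective hab)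

lemma pi_prod_summable (d : ℕ) : ∀ (f : Fin d → ℕ+ → ℝ),
    (∀ j m, 0 ≤ f j m) → (∀ j, Summable (f j)) →
    Summable (fun n : Fin d → ℕ+ => ∏ j, f j (n j)) := by
  induction d with
  | zero =>
      intro f _ _
      have : (fun n : Fin 0 → ℕ+ => ∏ j, f j (n j)) = fun _ => 1 := by
        funext n; simp
      rw [this]
      exact summable_of_finite_support (Set.toFinite _)
  | succ d ih =>
      intro f hnn hs
      have h2 : Summable (fun p : ℕ+ × (Fin d → ℕ+) =>
          f 0 p.1 * ∏ j, f j.succ (p.2 j)) := by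
        apply Summable.mul_of_nonneg (hs 0)
          (ih (fun j => f j.succ) (fun j m => hnn _ _) (fun j => hs _)) (fun m => hnn 0 m)
        exact fun p => Finset.prod_nonneg fun j _ => hnn _ _
      refine (Equiv.summable_iff (Fin.consEquiv (fun _ : Fin (d + 1) => ℕ+))).mp ?_
      have heq : ((fun n : Fin (d + 1) → ℕ+ => ∏ j, f j (n j)) ∘
          (Fin.consEquiv (fun _ : Fin (d + 1) => ℕ+)))
          = fun p : ℕ+ × (Fin d → ℕ+) => f 0 p.1 * ∏ j, f j.succ (p.2 j) := by
        funext p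
        simp [Fin.consEquiv, Fin.prod_univ_succ]
      rw [heq]
      exact h2

/-- For every `d ≥ 2`, `0 < α < 1`, and coordinate index `i`, the series
`∑_{n ∈ (ℤ₊)^d} n_i^α/((n₁² + ⋯ + n_d²) n₂ ⋯ n_d)` over all `d`-tuples of positive
integers converges, where the product `n₂ ⋯ n_d` ranges over all coordinates
except the first. -/
theorem stmt13 (d : ℕ) (hd : 2 ≤ d) (α : ℝ) (h0 : 0 < α) (h1 : α < 1) (i : Fin d) :
    Summable (fun n : Fin d → ℕ+ =>
      (((n i : ℕ)) : ℝ) ^ α / ((∑ j, (((n j : ℕ)) : ℝ) ^ 2) *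
        ∏ j ∈ Finset.univ.erase (⟨0, by omega⟩ : Fin d), (((n j : ℕ)) : ℝ))) := by
  have hz0 : 0 < d := by omega
  set z : Fin d := ⟨0, hz0⟩ with hzdef
  have hd1 : (1 : ℝ) ≤ (d : ℝ) - 1 := by
    have : (2 : ℝ) ≤ (d : ℝ) := by exact_mod_cast hd
    linarith
  have hdpos : (0 : ℝ) < (d : ℝ) - 1 := by linarith
  set δ : ℝ := (1 - α) / (2 * ((d : ℝ) - 1)) with hδdef
  have hδpos : 0 < δ := by
    apply div_pos (by linarith) (by linarith)
  set c : Fin d → ℝ := fun j => if j = z then 1 + (1 - α) / 2 else 1 + δ with hcdef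
  have hc1 : ∀ j, 1 < c j := by
    intro j
    simp only [hcdef]
    split_ifs <;> linarith
  have hprod : Summable (fun n : Fin d → ℕ+ => ∏ j, ((n j : ℕ) : ℝ) ^ (-(c j))) := by
    apply pi_prod_summable d (fun j m => ((m : ℕ) : ℝ) ^ (-(c j)))
    · intro j m
      exact Real.rpow_nonneg (by positivity) _
    · intro j
      exact pnat_rpow_summable (hc1 j)
  apply Summable.of_nonneg_of_le ?_ ?_ hprod
  · intro n
    positivity
  · intro n
    set e : Fin d → ℝ :=
      fun j => c j + (if j = i then α else 0) - (if j = z then 0 else 1) with hedef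
    set nr : Fin d → ℝ := fun j => ((n j : ℕ) : ℝ) with hnrdef
    have hnr : ∀ j, 0 < nr j := by
      intro j; simp only [hnrdef]; exact_mod_cast (n j).pos
    have h1r : ∀ j, 1 ≤ nr j := by
      intro j; simp only [hnrdef]; exact_mod_cast (n j).one_le
    set S : ℝ := ∑ j, nr j ^ 2 with hSdef
    set P : ℝ := ∏ j ∈ Finset.univ.erase z, nr j with hPdef
    set Q : ℝ := ∏ j, nr j ^ (c j) with hQdef
    have hsq : ∀ j, nr j ^ 2 ≤ S :=
      fun j => Finset.single_le_sum (fun k _ => sq_nonneg (nr k)) (mem_univ j)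
    have hS1 : (1 : ℝ) ≤ S := by
      have := hsq z
      nlinarith [h1r z]
    have hSpos : (0 : ℝ) < S := by linarith
    have hsqrt : ∀ j, nr j ≤ Real.sqrt S := by
      intro j
      exact (Real.le_sqrt (hnr j).le hSpos.le).mpr (hsq j)
    have he0 : ∀ j, 0 ≤ e j := by
      intro j
      simp only [hedef, hcdef]
      split_ifs <;> linarith
    have hesum : ∑ j, e j = 2 := by
      have h2 : ∀ j : Fin d, e j =
          δ + (if j = z then (1 - α) / 2 - δ + 1 else 0) + (if j = i then α else 0) := by
        intro j
        simp only [hedef, hcdef]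
        split_ifs <;> ring
      rw [Finset.sum_congr rfl (fun j _ => h2 j)]
      rw [Finset.sum_add_distrib, Finset.sum_add_distrib,
        Finset.sum_ite_eq' univ z, Finset.sum_ite_eq' univ i,
        if_pos (mem_univ z), if_pos (mem_univ i), Finset.sum_const,
        Finset.card_univ, Fintype.card_fin, nsmul_eq_mul]
      have : ((d : ℝ) - 1) * δ = (1 - α) / 2 := by
        rw [hδdef]; field_simp
      nlinarith [this]
    have hEle : ∏ j, nr j ^ (e j) ≤ S := by
      calc ∏ j, nr j ^ (e j)
          ≤ ∏ j, Real.sqrt S ^ (e j) :=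
            Finset.prod_le_prod (fun j _ => Real.rpow_nonneg (hnr j).le _)
              (fun j _ => Real.rpow_le_rpow (hnr j).le (hsqrt j) (he0 j))
        _ = Real.sqrt S ^ (∑ j, e j) :=
            (Real.rpow_sum_of_pos (Real.sqrt_pos.mpr hSpos) e univ).symm
        _ = Real.sqrt S ^ (2 : ℝ) := by rw [hesum]
        _ = S := by
            rw [show (2 : ℝ) = ((2 : ℕ) : ℝ) by norm_num, Real.rpow_natCast,
              Real.sq_sqrt hSpos.le]
    have hPpos : 0 < P := Finset.prod_pos (fun j _ => hnr j)
    have hQpos : 0 < Q := Finset.prod_pos (fun j _ => Real.rpow_pos_of_pos (hnr j) _)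
    have hQsplit : Q = (∏ j, nr j ^ (e j)) * P * nr i ^ (-α) := by
      have hterm : ∀ j : Fin d, nr j ^ (c j) =
          nr j ^ (e j) * nr j ^ (if j = z then (0 : ℝ) else 1) *
            nr j ^ (if j = i then -α else 0) := by
        intro j
        rw [← Real.rpow_add (hnr j), ← Real.rpow_add (hnr j)]
        congr 1
        simp only [hedef]
        split_ifs <;> ring
      rw [hQdef, Finset.prod_congr rfl (fun j _ => hterm j),
        Finset.prod_mul_distrib, Finset.prod_mul_distrib]
      congr 1
      · congr 1
        have h1 : ∀ j : Fin d, nr j ^ (if j = z then (0 : ℝ) else 1)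
            = if j = z then 1 else nr j := by
          intro j; split_ifs <;> simp [Real.rpow_zero, Real.rpow_one]
        rw [Finset.prod_congr rfl (fun j _ => h1 j),
          ← Finset.mul_prod_erase univ _ (mem_univ z), if_pos rfl, one_mul, hPdef]
        exact Finset.prod_congr rfl (fun j hj => if_neg (Finset.ne_of_mem_erase hj))
      · have h2 : ∀ j : Fin d, nr j ^ (if j = i then -α else 0)
            = if j = i then nr j ^ (-α) else 1 := by
          intro j; split_ifs <;> simp [Real.rpow_zero]
        rw [Finset.prod_congr rfl (fun j _ => h2 j), Finset.prod_ite_eq' univ i,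
          if_pos (mem_univ i)]
    have hkey : nr i ^ α * Q ≤ S * P := by
      have : nr i ^ α * Q = (∏ j, nr j ^ (e j)) * P := by
        rw [hQsplit]
        have : nr i ^ α * nr i ^ (-α) = 1 := by
          rw [← Real.rpow_add (hnr i)]
          simp
        calc nr i ^ α * ((∏ j, nr j ^ (e j)) * P * nr i ^ (-α))
            = (∏ j, nr j ^ (e j)) * P * (nr i ^ α * nr i ^ (-α)) := by ring
          _ = (∏ j, nr j ^ (e j)) * P := by rw [this, mul_one]
      rw [this]
      exact mul_le_mul_of_nonneg_right hEle hPpos.le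
    have hrhs : (∏ j, ((n j : ℕ) : ℝ) ^ (-(c j))) = Q⁻¹ := by
      rw [hQdef, ← Finset.prod_inv_distrib]
      exact Finset.prod_congr rfl (fun j _ => Real.rpow_neg (hnr j).le _)
    show nr i ^ α / (S * P) ≤ ∏ j, ((n j : ℕ) : ℝ) ^ (-(c j))
    rw [hrhs, inv_eq_one_div, div_le_div_iff₀ (by positivity) hQpos, one_mul]
    exact hkey
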